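/- In the class Av(132,231): 321_n/(n·|Av_n(132,231)|) → 1/2, 123_n/(n·|Av_n(132,231)|) → 1/2, 213_n/(n·|Av_n(132,231)|) → 0, and 312_n/(n·|Av_n(132,231)|) → 0, as n → ∞. -/

import Mathlib

/-- `ConsecOcc p π i`: the word `π(i) π(i+1) … π(i+r-1)` (positions `0`-indexed)
is order-isomorphic to the pattern word `p 0, …, p (r-1)`. -/
def ConsecOcc {n r : ℕ} (p : Fin r → ℕ) (π : Equiv.Perm (Fin n)) (i : ℕ) : Prop :=
  ∃ h : i + r ≤ n, ∀ j k : Fin r,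
    (π ⟨i + j.val, by have := j.isLt; omega⟩ < π ⟨i + k.val, by have := k.isLt; omega⟩
      ↔ p j < p k)

/-- The number of consecutive occurrences of the pattern `p` in `π`. -/
noncomputable def occCount {n r : ℕ} (p : Fin r → ℕ) (π : Equiv.Perm (Fin n)) : ℕ :=
  Nat.card {i : ℕ // ConsecOcc p π i}

/-- `π` has no consecutive occurrence of any pattern in `ps`. -/
def AvoidsAll {n r : ℕ} (ps : List (Fin r → ℕ)) (π : Equiv.Perm (Fin n)) : Prop :=
  ∀ p ∈ ps, ∀ i, ¬ ConsecOcc p π i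

-- Total number of consecutive occurrences of `p` over all size-`n` permutations satisfying `P`.
open scoped Classical in
noncomputable def totOcc {n r : ℕ} (p : Fin r → ℕ) (P : Equiv.Perm (Fin n) → Prop) : ℕ :=
  ∑ π : Equiv.Perm (Fin n), if P π then occCount p π else 0

/-- The number of size-`n` permutations satisfying `P`. -/
noncomputable def classCard (n : ℕ) (P : Equiv.Perm (Fin n) → Prop) : ℕ :=
  Nat.card {π : Equiv.Perm (Fin n) // P π}

def p123 : Fin 3 → ℕ := ![1,2,3]
def p132 : Fin 3 → ℕ := ![1,3,2]
def p213 : Fin 3 → ℕ := ![2,1,3]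
def p231 : Fin 3 → ℕ := ![2,3,1]
def p312 : Fin 3 → ℕ := ![3,1,2]
def p321 : Fin 3 → ℕ := ![3,2,1]

open scoped Classical

namespace S18

variable {n : ℕ}

noncomputable def occSet (p : Fin 3 → ℕ) (π : Equiv.Perm (Fin n)) : Finset ℕ :=
  (Finset.range n).filter (fun i => ConsecOcc p π i)

lemma mem_occSet {p : Fin 3 → ℕ} {π : Equiv.Perm (Fin n)} {i : ℕ} :
    i ∈ occSet p π ↔ ConsecOcc p π i := by
  simp only [occSet, Finset.mem_filter, Finset.mem_range, and_iff_right_iff_imp]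
  rintro ⟨h, -⟩; omega

lemma occCount_eq (p : Fin 3 → ℕ) (π : Equiv.Perm (Fin n)) :
    occCount p π = (occSet p π).card := by
  have h1 : {i : ℕ | ConsecOcc p π i} = ↑(occSet p π) := by
    ext i; simp [mem_occSet]
  rw [occCount]
  have h2 := Nat.card_coe_set_eq (s := {i : ℕ | ConsecOcc p π i})
  exact h2.trans (by rw [h1, Set.ncard_coe_finset])

lemma classCard_eq (P : Equiv.Perm (Fin n) → Prop) :
    classCard n P = (Finset.univ.filter P).card := by
  rw [classCard, Nat.card_eq_fintype_card, Fintype.card_subtype]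


lemma lt3_0 {i n : ℕ} (h : i + 3 ≤ n) : i < n :=
  Nat.lt_of_lt_of_le (Nat.lt_add_of_pos_right (by decide)) h

lemma lt3_1 {i n : ℕ} (h : i + 3 ≤ n) : i + 1 < n :=
  Nat.lt_of_lt_of_le (Nat.add_lt_add_left (by decide) i) h

lemma lt3_2 {i n : ℕ} (h : i + 3 ≤ n) : i + 2 < n :=
  Nat.lt_of_lt_of_le (Nat.add_lt_add_left (by decide) i) h

lemma consecOcc_iff (p : Fin 3 → ℕ) (π : Equiv.Perm (Fin n)) (i : ℕ) (h : i + 3 ≤ n)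
    (hp01 : p 0 ≠ p 1) (hp02 : p 0 ≠ p 2) (hp12 : p 1 ≠ p 2) :
    ConsecOcc p π i ↔
      ((π ⟨i, lt3_0 h⟩ < π ⟨i+1, lt3_1 h⟩ ↔ p 0 < p 1) ∧
       (π ⟨i, lt3_0 h⟩ < π ⟨i+2, lt3_2 h⟩ ↔ p 0 < p 2) ∧
       (π ⟨i+1, lt3_1 h⟩ < π ⟨i+2, lt3_2 h⟩ ↔ p 1 < p 2)) := by
  have e01 : π ⟨i, lt3_0 h⟩ ≠ π ⟨i+1, lt3_1 h⟩ := by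
    intro e; have := π.injective e; simp [Fin.ext_iff] at this
  have e02 : π ⟨i, lt3_0 h⟩ ≠ π ⟨i+2, lt3_2 h⟩ := by
    intro e; have := π.injective e; simp [Fin.ext_iff] at this
  have e12 : π ⟨i+1, lt3_1 h⟩ ≠ π ⟨i+2, lt3_2 h⟩ := by
    intro e; have := π.injective e; simp [Fin.ext_iff] at this
  constructor
  · rintro ⟨h', hper⟩
    refine ⟨?_, ?_, ?_⟩
    · simpa using hper 0 1
    · simpa using hper 0 2
    · simpa using hper 1 2
  · rintro ⟨h1, h2, h3⟩
    refine ⟨h, ?_⟩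
    rw [Fin.ne_iff_vne] at e01 e02 e12
    rw [Fin.lt_def] at h1 h2 h3
    intro j k
    have P0 : (⟨0, by omega⟩ : Fin 3) = 0 := rfl
    have P1 : (⟨1, by omega⟩ : Fin 3) = 1 := rfl
    have P2 : (⟨2, by omega⟩ : Fin 3) = 2 := rfl
    fin_cases j <;> fin_cases k <;>
      simp only [Fin.lt_def, Fin.isValue, Nat.add_zero, P0, P1, P2] <;>
      omega

lemma consec_compare {p q : Fin 3 → ℕ} {π : Equiv.Perm (Fin n)} {i : ℕ}
    (h1 : ConsecOcc p π i) (h2 : ConsecOcc q π i) :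
    ∀ j k : Fin 3, (p j < p k ↔ q j < q k) := by
  obtain ⟨hb, H1⟩ := h1; obtain ⟨hb', H2⟩ := h2
  intro j k
  exact (H1 j k).symm.trans (H2 j k)

lemma pat_ne : (p123 0 ≠ p123 1 ∧ p123 0 ≠ p123 2 ∧ p123 1 ≠ p123 2) ∧
    (p132 0 ≠ p132 1 ∧ p132 0 ≠ p132 2 ∧ p132 1 ≠ p132 2) ∧
    (p213 0 ≠ p213 1 ∧ p213 0 ≠ p213 2 ∧ p213 1 ≠ p213 2) ∧
    (p231 0 ≠ p231 1 ∧ p231 0 ≠ p231 2 ∧ p231 1 ≠ p231 2) ∧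
    (p312 0 ≠ p312 1 ∧ p312 0 ≠ p312 2 ∧ p312 1 ≠ p312 2) ∧
    (p321 0 ≠ p321 1 ∧ p321 0 ≠ p321 2 ∧ p321 1 ≠ p321 2) := by
  refine ⟨⟨?_,?_,?_⟩,⟨?_,?_,?_⟩,⟨?_,?_,?_⟩,⟨?_,?_,?_⟩,⟨?_,?_,?_⟩,⟨?_,?_,?_⟩⟩ <;> decide

lemma cover (π : Equiv.Perm (Fin n)) (hA : AvoidsAll [p132, p231] π) (i : ℕ)
    (h : i + 3 ≤ n) :
    ConsecOcc p123 π i ∨ ConsecOcc p213 π i ∨ ConsecOcc p312 π i ∨ ConsecOcc p321 π i := by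
  have n132 := hA p132 (by simp) i
  have n231 := hA p231 (by simp) i
  obtain ⟨⟨A1,A2,A3⟩,⟨B1,B2,B3⟩,⟨C1,C2,C3⟩,⟨D1,D2,D3⟩,⟨E1,E2,E3⟩,⟨F1,F2,F3⟩⟩ := pat_ne
  rw [consecOcc_iff p132 π i h B1 B2 B3] at n132
  rw [consecOcc_iff p231 π i h D1 D2 D3] at n231
  rw [consecOcc_iff p123 π i h A1 A2 A3, consecOcc_iff p213 π i h C1 C2 C3,
    consecOcc_iff p312 π i h E1 E2 E3, consecOcc_iff p321 π i h F1 F2 F3]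
  have e01 : π ⟨i, lt3_0 h⟩ ≠ π ⟨i+1, lt3_1 h⟩ := by
    intro e; have := π.injective e; simp [Fin.ext_iff] at this
  have e02 : π ⟨i, lt3_0 h⟩ ≠ π ⟨i+2, lt3_2 h⟩ := by
    intro e; have := π.injective e; simp [Fin.ext_iff] at this
  have e12 : π ⟨i+1, lt3_1 h⟩ ≠ π ⟨i+2, lt3_2 h⟩ := by
    intro e; have := π.injective e; simp [Fin.ext_iff] at this
  rw [Fin.ne_iff_vne] at e01 e02 e12
  simp only [Fin.lt_def, p123, p132, p213, p231, p312, p321] at *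
  norm_num [Matrix.cons_val_two, Matrix.tail_cons, Matrix.head_cons] at *
  omega

lemma not_both {p q : Fin 3 → ℕ} {π : Equiv.Perm (Fin n)} {i : ℕ}
    (j k : Fin 3) (hw : p j < p k) (hw' : ¬ q j < q k)
    (h1 : ConsecOcc p π i) (h2 : ConsecOcc q π i) : False := by
  have := consec_compare h1 h2 j k
  tauto

lemma sum_four (π : Equiv.Perm (Fin n)) (hA : AvoidsAll [p132, p231] π) :
    occCount p123 π + occCount p213 π + occCount p312 π + occCount p321 π = n - 2 := by
  classical
  have hd1 : Disjoint (occSet p123 π) (occSet p213 π) := by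
    rw [Finset.disjoint_left]; intro i h1 h2
    rw [mem_occSet] at h1 h2
    exact not_both 0 1 (by decide) (by decide) h1 h2
  have hd2 : Disjoint (occSet p123 π) (occSet p312 π) := by
    rw [Finset.disjoint_left]; intro i h1 h2
    rw [mem_occSet] at h1 h2
    exact not_both 0 1 (by decide) (by decide) h1 h2
  have hd3 : Disjoint (occSet p123 π) (occSet p321 π) := by
    rw [Finset.disjoint_left]; intro i h1 h2
    rw [mem_occSet] at h1 h2
    exact not_both 0 1 (by decide) (by decide) h1 h2
  have hd4 : Disjoint (occSet p213 π) (occSet p312 π) := by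
    rw [Finset.disjoint_left]; intro i h1 h2
    rw [mem_occSet] at h1 h2
    exact not_both 0 2 (by decide) (by decide) h1 h2
  have hd5 : Disjoint (occSet p213 π) (occSet p321 π) := by
    rw [Finset.disjoint_left]; intro i h1 h2
    rw [mem_occSet] at h1 h2
    exact not_both 1 2 (by decide) (by decide) h1 h2
  have hd6 : Disjoint (occSet p312 π) (occSet p321 π) := by
    rw [Finset.disjoint_left]; intro i h1 h2
    rw [mem_occSet] at h1 h2
    exact not_both 1 2 (by decide) (by decide) h1 h2
  have hu : occSet p123 π ∪ occSet p213 π ∪ occSet p312 π ∪ occSet p321 π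
      = Finset.range (n - 2) := by
    ext i
    simp only [Finset.mem_union, mem_occSet, Finset.mem_range]
    constructor
    · rintro (((h|h)|h)|h) <;> (obtain ⟨hb, -⟩ := h; omega)
    · intro hi
      have h3 : i + 3 ≤ n := by omega
      rcases cover π hA i h3 with h|h|h|h
      · exact Or.inl (Or.inl (Or.inl h))
      · exact Or.inl (Or.inl (Or.inr h))
      · exact Or.inl (Or.inr h)
      · exact Or.inr h
  have := Finset.card_union_of_disjoint (s := occSet p123 π ∪ occSet p213 π ∪ occSet p312 π)
    (t := occSet p321 π) (by
      simp only [Finset.disjoint_union_left]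
      exact ⟨⟨hd3, hd5⟩, hd6⟩)
  rw [hu] at this
  rw [Finset.card_union_of_disjoint (by simp only [Finset.disjoint_union_left]; exact ⟨hd2, hd4⟩),
    Finset.card_union_of_disjoint hd1, Finset.card_range] at this
  rw [occCount_eq, occCount_eq, occCount_eq, occCount_eq]
  omega

noncomputable def revP (π : Equiv.Perm (Fin n)) : Equiv.Perm (Fin n) :=
  (Fin.revPerm).trans π

lemma revP_apply (π : Equiv.Perm (Fin n)) (j : Fin n) : revP π j = π j.rev := rfl

lemma revP_revP (π : Equiv.Perm (Fin n)) : revP (revP π) = π := by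
  ext j
  simp [revP_apply, Fin.rev_rev]

set_option maxHeartbeats 4000000 in
lemma consec_revP (p q : Fin 3 → ℕ) (hq0 : q 0 = p 2) (hq1 : q 1 = p 1) (hq2 : q 2 = p 0)
    (hp01 : p 0 ≠ p 1) (hp02 : p 0 ≠ p 2) (hp12 : p 1 ≠ p 2)
    (π : Equiv.Perm (Fin n)) (i : ℕ) (h : i + 3 ≤ n) :
    ConsecOcc p (revP π) i ↔ ConsecOcc q π (n - 3 - i) := by
  have h' : (n - 3 - i) + 3 ≤ n := by omega
  rw [consecOcc_iff p (revP π) i h hp01 hp02 hp12,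
    consecOcc_iff q π (n - 3 - i) h' (by omega) (by omega) (by omega)]
  have E0 : revP π ⟨i, lt3_0 h⟩ = π ⟨n - 3 - i + 2, lt3_2 h'⟩ := by
    rw [revP_apply]; congr 1; ext; simp [Fin.val_rev]; omega
  have E1 : revP π ⟨i + 1, lt3_1 h⟩ = π ⟨n - 3 - i + 1, lt3_1 h'⟩ := by
    rw [revP_apply]; congr 1; ext; simp [Fin.val_rev]; omega
  have E2 : revP π ⟨i + 2, lt3_2 h⟩ = π ⟨n - 3 - i, lt3_0 h'⟩ := by
    rw [revP_apply]; congr 1; ext; simp [Fin.val_rev]; omega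
  rw [E0, E1, E2, hq0, hq1, hq2]
  have e01 : π ⟨n - 3 - i, lt3_0 h'⟩ ≠ π ⟨n - 3 - i + 1, lt3_1 h'⟩ := by
    intro e; have := π.injective e; simp [Fin.ext_iff] at this
  have e02 : π ⟨n - 3 - i, lt3_0 h'⟩ ≠ π ⟨n - 3 - i + 2, lt3_2 h'⟩ := by
    intro e; have := π.injective e; simp [Fin.ext_iff] at this
  have e12 : π ⟨n - 3 - i + 1, lt3_1 h'⟩ ≠ π ⟨n - 3 - i + 2, lt3_2 h'⟩ := by
    intro e; have := π.injective e; simp [Fin.ext_iff] at this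
  rw [Fin.ne_iff_vne] at e01 e02 e12
  simp only [Fin.lt_def]
  omega

lemma occCount_revP (p q : Fin 3 → ℕ) (hq0 : q 0 = p 2) (hq1 : q 1 = p 1) (hq2 : q 2 = p 0)
    (hp01 : p 0 ≠ p 1) (hp02 : p 0 ≠ p 2) (hp12 : p 1 ≠ p 2) (π : Equiv.Perm (Fin n)) :
    occCount p (revP π) = occCount q π := by
  rw [occCount_eq, occCount_eq]
  apply Finset.card_bij' (fun i _ => n - 3 - i) (fun i _ => n - 3 - i)
  · intro i hi
    rw [mem_occSet] at hi ⊢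
    have hb : i + 3 ≤ n := hi.1
    exact (consec_revP p q hq0 hq1 hq2 hp01 hp02 hp12 π i hb).1 hi
  · intro j hj
    rw [mem_occSet] at hj ⊢
    have hb : j + 3 ≤ n := hj.1
    have hb2 : n - 3 - (n - 3 - j) = j := by omega
    have := (consec_revP p q hq0 hq1 hq2 hp01 hp02 hp12 π (n - 3 - j) (by omega)).2
    rw [hb2] at this
    exact this hj
  · intro i hi
    rw [mem_occSet] at hi
    have hb : i + 3 ≤ n := hi.1
    omega
  · intro j hj
    rw [mem_occSet] at hj
    have hb : j + 3 ≤ n := hj.1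
    omega

lemma avoids_revP_mp (π : Equiv.Perm (Fin n)) (hA : AvoidsAll [p132, p231] π) :
    AvoidsAll [p132, p231] (revP π) := by
  intro p hp i hocc
  have hb : i + 3 ≤ n := hocc.1
  simp only [List.mem_cons, List.mem_singleton, List.not_mem_nil, or_false] at hp
  rcases hp with rfl | rfl
  · exact hA p231 (by simp) (n - 3 - i)
      ((consec_revP p132 p231 (by decide) (by decide) (by decide)
        (by decide) (by decide) (by decide) π i hb).1 hocc)
  · exact hA p132 (by simp) (n - 3 - i)
      ((consec_revP p231 p132 (by decide) (by decide) (by decide)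
        (by decide) (by decide) (by decide) π i hb).1 hocc)

lemma avoids_revP (π : Equiv.Perm (Fin n)) :
    AvoidsAll [p132, p231] (revP π) ↔ AvoidsAll [p132, p231] π := by
  constructor
  · intro h
    have := avoids_revP_mp (revP π) h
    rwa [revP_revP] at this
  · exact avoids_revP_mp π

noncomputable def revPEquiv : Equiv.Perm (Fin n) ≃ Equiv.Perm (Fin n) :=
  ⟨revP, revP, revP_revP, revP_revP⟩

lemma totOcc_revPair (p q : Fin 3 → ℕ) (hq0 : q 0 = p 2) (hq1 : q 1 = p 1) (hq2 : q 2 = p 0)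
    (hp01 : p 0 ≠ p 1) (hp02 : p 0 ≠ p 2) (hp12 : p 1 ≠ p 2) :
    totOcc p (AvoidsAll (n := n) [p132, p231]) = totOcc q (AvoidsAll (n := n) [p132, p231]) := by
  rw [totOcc, totOcc]
  refine Fintype.sum_equiv revPEquiv _ _ ?_
  intro π
  show (if AvoidsAll [p132, p231] π then occCount p π else 0)
    = (if AvoidsAll [p132, p231] (revP π) then occCount q (revP π) else 0)
  rw [avoids_revP, occCount_revP q p hq2.symm hq1.symm hq0.symm (by omega) (by omega) (by omega)]

def Asc (π : Equiv.Perm (Fin n)) (m : ℕ) : Prop :=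
  ∃ h : m + 2 ≤ n, π ⟨m, by omega⟩ < π ⟨m + 1, by omega⟩

lemma asc_step (π : Equiv.Perm (Fin n)) (hA : AvoidsAll [p132, p231] π) (m : ℕ)
    (h : m + 3 ≤ n) (ha : Asc π m) : Asc π (m + 1) := by
  obtain ⟨h2, ha⟩ := ha
  refine ⟨by omega, ?_⟩
  by_contra hc
  push_neg at hc
  have hne : π ⟨m + 1 + 1, by omega⟩ ≠ π ⟨m + 1, by omega⟩ := by
    intro e; have := π.injective e; simp [Fin.ext_iff] at this
  have hlt : π ⟨m + 1 + 1, by omega⟩ < π ⟨m + 1, by omega⟩ := lt_of_le_of_ne hc hne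
  obtain ⟨⟨A1,A2,A3⟩,⟨B1,B2,B3⟩,⟨C1,C2,C3⟩,⟨D1,D2,D3⟩,⟨E1,E2,E3⟩,⟨F1,F2,F3⟩⟩ := pat_ne
  have n132 := hA p132 (by simp) m
  have n231 := hA p231 (by simp) m
  rw [consecOcc_iff p132 π m h B1 B2 B3] at n132
  rw [consecOcc_iff p231 π m h D1 D2 D3] at n231
  have e02 : π ⟨m, lt3_0 h⟩ ≠ π ⟨m+2, lt3_2 h⟩ := by
    intro e; have := π.injective e; simp [Fin.ext_iff] at this
  rw [Fin.ne_iff_vne] at e02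
  have ha' : (π ⟨m, lt3_0 h⟩).val < (π ⟨m+1, lt3_1 h⟩).val := by
    rw [← Fin.lt_def]; exact ha
  have hlt' : (π ⟨m+2, lt3_2 h⟩).val < (π ⟨m+1, lt3_1 h⟩).val := by
    rw [← Fin.lt_def]; exact hlt
  simp only [Fin.lt_def, p132, p231] at n132 n231
  norm_num [Matrix.cons_val_two, Matrix.tail_cons, Matrix.head_cons] at n132 n231
  omega

lemma asc_prop (π : Equiv.Perm (Fin n)) (hA : AvoidsAll [p132, p231] π) (k : ℕ)
    (hk : Asc π k) : ∀ m, k ≤ m → m + 2 ≤ n → Asc π m := by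
  intro m hm
  induction m, hm using Nat.le_induction with
  | base => intro _; exact hk
  | succ m hm ih =>
    intro h
    exact asc_step π hA m (by omega) (ih (by omega))

lemma valley_eq (π : Equiv.Perm (Fin n)) (hA : AvoidsAll [p132, p231] π) {i j : ℕ}
    (hi : i + 3 ≤ n) (hj : j + 3 ≤ n)
    (vi : π ⟨i + 1, lt3_1 hi⟩ < π ⟨i + 2, lt3_2 hi⟩)
    (vj : π ⟨j, lt3_0 hj⟩ > π ⟨j + 1, lt3_1 hj⟩) : j ≤ i := by
  by_contra hc
  push_neg at hc
  have hasc : Asc π (i + 1) := ⟨by omega, vi⟩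
  have := asc_prop π hA (i + 1) hasc j (by omega) (by omega)
  obtain ⟨hb, this⟩ := this
  have h1 : (π ⟨j, lt3_0 hj⟩).val < (π ⟨j+1, lt3_1 hj⟩).val := by
    have := Fin.lt_def.mp this
    simpa using this
  have h2 : (π ⟨j+1, lt3_1 hj⟩).val < (π ⟨j, lt3_0 hj⟩).val := Fin.lt_def.mp vj
  omega

/-- any occurrence of 213 or 312 is a valley window -/
lemma valley_of_occ {p : Fin 3 → ℕ} (hp : p = p213 ∨ p = p312) (π : Equiv.Perm (Fin n))
    {i : ℕ} (hocc : ConsecOcc p π i) :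
    ∃ h : i + 3 ≤ n, π ⟨i, lt3_0 h⟩ > π ⟨i + 1, lt3_1 h⟩ ∧
      π ⟨i + 1, lt3_1 h⟩ < π ⟨i + 2, lt3_2 h⟩ := by
  have h : i + 3 ≤ n := hocc.1
  refine ⟨h, ?_⟩
  obtain ⟨⟨A1,A2,A3⟩,⟨B1,B2,B3⟩,⟨C1,C2,C3⟩,⟨D1,D2,D3⟩,⟨E1,E2,E3⟩,⟨F1,F2,F3⟩⟩ := pat_ne
  have e01 : π ⟨i, lt3_0 h⟩ ≠ π ⟨i+1, lt3_1 h⟩ := by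
    intro e; have := π.injective e; simp [Fin.ext_iff] at this
  rw [Fin.ne_iff_vne] at e01
  rcases hp with rfl | rfl
  · rw [consecOcc_iff p213 π i h C1 C2 C3] at hocc
    obtain ⟨h1, h2, h3⟩ := hocc
    simp only [Fin.lt_def, p213] at h1 h2 h3 ⊢
    norm_num [Matrix.cons_val_two, Matrix.tail_cons, Matrix.head_cons] at h1 h2 h3
    constructor
    · show (π ⟨i+1, _⟩).val < (π ⟨i, _⟩).val
      omega
    · omega
  · rw [consecOcc_iff p312 π i h E1 E2 E3] at hocc
    obtain ⟨h1, h2, h3⟩ := hocc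
    simp only [Fin.lt_def, p312] at h1 h2 h3 ⊢
    norm_num [Matrix.cons_val_two, Matrix.tail_cons, Matrix.head_cons] at h1 h2 h3
    constructor
    · show (π ⟨i+1, _⟩).val < (π ⟨i, _⟩).val
      omega
    · omega

lemma occ_valley_unique {p q : Fin 3 → ℕ} (hp : p = p213 ∨ p = p312)
    (hq : q = p213 ∨ q = p312) (π : Equiv.Perm (Fin n))
    (hA : AvoidsAll [p132, p231] π) {i j : ℕ}
    (h1 : ConsecOcc p π i) (h2 : ConsecOcc q π j) : i = j := by
  obtain ⟨hi, vi1, vi2⟩ := valley_of_occ hp π h1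
  obtain ⟨hj, vj1, vj2⟩ := valley_of_occ hq π h2
  have := valley_eq π hA hi hj vi2 vj1
  have := valley_eq π hA hj hi vj2 vi1
  omega

lemma occ_valleys_le_one (π : Equiv.Perm (Fin n)) (hA : AvoidsAll [p132, p231] π) :
    occCount p213 π + occCount p312 π ≤ 1 := by
  classical
  have hdisj : Disjoint (occSet p213 π) (occSet p312 π) := by
    rw [Finset.disjoint_left]; intro i h1 h2
    rw [mem_occSet] at h1 h2
    exact not_both 0 2 (by decide) (by decide) h1 h2
  rw [occCount_eq, occCount_eq, ← Finset.card_union_of_disjoint hdisj]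
  apply Finset.card_le_one.mpr
  intro a ha b hb
  simp only [Finset.mem_union, mem_occSet] at ha hb
  rcases ha with ha | ha <;> rcases hb with hb | hb
  · exact occ_valley_unique (Or.inl rfl) (Or.inl rfl) π hA ha hb
  · exact occ_valley_unique (Or.inl rfl) (Or.inr rfl) π hA ha hb
  · exact occ_valley_unique (Or.inr rfl) (Or.inl rfl) π hA ha hb
  · exact occ_valley_unique (Or.inr rfl) (Or.inr rfl) π hA ha hb

lemma id_avoids : AvoidsAll (n := n) [p132, p231] 1 := by
  intro p hp i hocc
  have h : i + 3 ≤ n := hocc.1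
  obtain ⟨⟨A1,A2,A3⟩,⟨B1,B2,B3⟩,⟨C1,C2,C3⟩,⟨D1,D2,D3⟩,⟨E1,E2,E3⟩,⟨F1,F2,F3⟩⟩ := pat_ne
  simp only [List.mem_cons, List.mem_singleton, List.not_mem_nil, or_false] at hp
  rcases hp with rfl | rfl
  · rw [consecOcc_iff p132 (1 : Equiv.Perm (Fin n)) i h B1 B2 B3] at hocc
    obtain ⟨-, -, h3⟩ := hocc
    simp only [Equiv.Perm.one_apply, Fin.mk_lt_mk, p132] at h3
    norm_num [Matrix.cons_val_two, Matrix.tail_cons, Matrix.head_cons] at h3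
  · rw [consecOcc_iff p231 (1 : Equiv.Perm (Fin n)) i h D1 D2 D3] at hocc
    obtain ⟨-, -, h3⟩ := hocc
    simp only [Equiv.Perm.one_apply, Fin.mk_lt_mk, p231] at h3
    norm_num [Matrix.cons_val_two, Matrix.tail_cons, Matrix.head_cons] at h3

lemma classCard_pos : 0 < classCard n (AvoidsAll [p132, p231]) := by
  rw [classCard]
  have : Nonempty {π : Equiv.Perm (Fin n) // AvoidsAll [p132, p231] π} := ⟨⟨1, id_avoids⟩⟩
  exact Nat.card_pos

open scoped Classical in
lemma tot_sum :
    totOcc p123 (AvoidsAll (n := n) [p132, p231])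
      + totOcc p213 (AvoidsAll (n := n) [p132, p231])
      + totOcc p312 (AvoidsAll (n := n) [p132, p231])
      + totOcc p321 (AvoidsAll (n := n) [p132, p231])
      = (n - 2) * classCard n (AvoidsAll [p132, p231]) := by
  simp only [totOcc, ← Finset.sum_add_distrib]
  have : ∀ π : Equiv.Perm (Fin n),
      ((if AvoidsAll [p132, p231] π then occCount p123 π else 0)
        + (if AvoidsAll [p132, p231] π then occCount p213 π else 0)
        + (if AvoidsAll [p132, p231] π then occCount p312 π else 0)
        + (if AvoidsAll [p132, p231] π then occCount p321 π else 0))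
      = (if AvoidsAll [p132, p231] π then n - 2 else 0) := by
    intro π
    by_cases hπ : AvoidsAll [p132, p231] π
    · simp only [if_pos hπ]
      exact sum_four π hπ
    · simp [if_neg hπ]
  rw [Finset.sum_congr rfl (fun π _ => this π)]
  rw [← Finset.sum_filter, Finset.sum_const, smul_eq_mul, classCard_eq, mul_comm]

open scoped Classical in
lemma tot_valleys_le :
    totOcc p213 (AvoidsAll (n := n) [p132, p231])
      + totOcc p312 (AvoidsAll (n := n) [p132, p231])
      ≤ classCard n (AvoidsAll [p132, p231]) := by
  simp only [totOcc, ← Finset.sum_add_distrib]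
  calc (∑ π : Equiv.Perm (Fin n),
        ((if AvoidsAll [p132, p231] π then occCount p213 π else 0)
          + (if AvoidsAll [p132, p231] π then occCount p312 π else 0)))
      ≤ ∑ π : Equiv.Perm (Fin n), (if AvoidsAll [p132, p231] π then 1 else 0) := by
        apply Finset.sum_le_sum
        intro π _
        by_cases hπ : AvoidsAll [p132, p231] π
        · simp only [if_pos hπ]
          exact occ_valleys_le_one π hπ
        · simp [if_neg hπ]
    _ = classCard n (AvoidsAll [p132, p231]) := by
        rw [Finset.sum_boole, classCard_eq]
        simp

lemma tot_321_123 :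
    totOcc p321 (AvoidsAll (n := n) [p132, p231])
      = totOcc p123 (AvoidsAll (n := n) [p132, p231]) := by
  exact totOcc_revPair p321 p123 (by decide) (by decide) (by decide)
    (by decide) (by decide) (by decide)

lemma tot_213_312 :
    totOcc p213 (AvoidsAll (n := n) [p132, p231])
      = totOcc p312 (AvoidsAll (n := n) [p132, p231]) := by
  exact totOcc_revPair p213 p312 (by decide) (by decide) (by decide)
    (by decide) (by decide) (by decide)

noncomputable def Cc (n : ℕ) : ℕ := classCard n (AvoidsAll [p132, p231])
noncomputable def tA (n : ℕ) : ℕ := totOcc p321 (AvoidsAll (n := n) [p132, p231])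
noncomputable def tB (n : ℕ) : ℕ := totOcc p123 (AvoidsAll (n := n) [p132, p231])
noncomputable def tC (n : ℕ) : ℕ := totOcc p213 (AvoidsAll (n := n) [p132, p231])
noncomputable def tD (n : ℕ) : ℕ := totOcc p312 (AvoidsAll (n := n) [p132, p231])

open Filter

lemma limC : Tendsto (fun n : ℕ => (tC n : ℝ) / (n * Cc n)) atTop (nhds 0) := by
  apply tendsto_of_tendsto_of_tendsto_of_le_of_le'
    (tendsto_const_nhds (x := (0:ℝ)))
    (tendsto_one_div_atTop_nhds_zero_nat)
  · filter_upwards [eventually_ge_atTop 1] with m hm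
    positivity
  · filter_upwards [eventually_ge_atTop 1] with m hm
    have hC : (0:ℝ) < Cc m := by
      have := classCard_pos (n := m); exact_mod_cast this
    have hm' : (0:ℝ) < m := by exact_mod_cast hm
    have hcC : (tC m : ℝ) ≤ Cc m := by
      have h := tot_valleys_le (n := m)
      have : tC m ≤ Cc m := le_trans (Nat.le_add_right _ _) h
      exact_mod_cast this
    calc (tC m:ℝ)/(m * Cc m) ≤ (Cc m:ℝ)/(m * Cc m) := by
          apply div_le_div_of_nonneg_right hcC (by positivity)
      _ = 1/m := by field_simp
  
lemma limD : Tendsto (fun n : ℕ => (tD n : ℝ) / (n * Cc n)) atTop (nhds 0) := by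
  have he : (fun n : ℕ => (tD n : ℝ) / (n * Cc n)) = fun n : ℕ => (tC n : ℝ) / (n * Cc n) := by
    funext m
    rw [show tC m = tD m from tot_213_312]
  rw [he]
  exact limC

lemma limA : Tendsto (fun n : ℕ => (tA n : ℝ) / (n * Cc n)) atTop (nhds (1/2)) := by
  have hh : Tendsto (fun n : ℕ => ((n:ℝ)-2)/(2*n)) atTop (nhds (1/2)) := by
    have h0 : Tendsto (fun n : ℕ => 1/2 - 1/(n:ℝ)) atTop (nhds (1/2 - 0)) :=
      tendsto_const_nhds.sub tendsto_one_div_atTop_nhds_zero_nat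
    rw [sub_zero] at h0
    apply Filter.Tendsto.congr' _ h0
    filter_upwards [eventually_ge_atTop 1] with m hm
    have hm' : (0:ℝ) < m := by exact_mod_cast hm
    field_simp
  have h1 : Tendsto (fun n : ℕ => ((n:ℝ)-2)/(2*n) - (tC n : ℝ)/(n * Cc n)) atTop
      (nhds (1/2)) := by
    have := hh.sub limC
    rwa [sub_zero] at this
  apply Filter.Tendsto.congr' _ h1
  filter_upwards [eventually_ge_atTop 2] with m hm
  have hC : (0:ℝ) < Cc m := by
    have := classCard_pos (n := m); exact_mod_cast this
  have hm' : (0:ℝ) < m := by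
    have : 0 < m := by omega
    exact_mod_cast this
  have key : 2*(tA m:ℝ) + 2*(tC m:ℝ) = ((m:ℝ)-2) * (Cc m:ℝ) := by
    have hN : tB m + tC m + tD m + tA m = (m-2) * Cc m := tot_sum
    have e1 : tA m = tB m := tot_321_123
    have e2 : tC m = tD m := tot_213_312
    have hNR : (tB m:ℝ) + tC m + tD m + tA m = ((m:ℝ)-2) * Cc m := by
      have := congrArg (fun x : ℕ => (x:ℝ)) hN
      push_cast [Nat.cast_sub hm] at this
      convert this using 2
    have e1R : (tA m:ℝ) = tB m := by exact_mod_cast e1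
    have e2R : (tC m:ℝ) = tD m := by exact_mod_cast e2
    linarith
  have hnum : (tA m:ℝ) = ((m:ℝ)-2) * (Cc m:ℝ)/2 - tC m := by linarith
  rw [hnum, sub_div]
  field_simp

lemma limB : Tendsto (fun n : ℕ => (tB n : ℝ) / (n * Cc n)) atTop (nhds (1/2)) := by
  have he : (fun n : ℕ => (tB n : ℝ) / (n * Cc n)) = fun n : ℕ => (tA n : ℝ) / (n * Cc n) := by
    funext m
    rw [show tA m = tB m from tot_321_123]
  rw [he]
  exact limA


end S18

theorem stmt18 :
    Filter.Tendsto (fun n : ℕ =>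
        (totOcc p321 (AvoidsAll (n := n) [p132, p231]) : ℝ)
          / (n * classCard n (AvoidsAll [p132, p231])))
      Filter.atTop (nhds (1 / 2))
    ∧ Filter.Tendsto (fun n : ℕ =>
        (totOcc p123 (AvoidsAll (n := n) [p132, p231]) : ℝ)
          / (n * classCard n (AvoidsAll [p132, p231])))
      Filter.atTop (nhds (1 / 2))
    ∧ Filter.Tendsto (fun n : ℕ =>
        (totOcc p213 (AvoidsAll (n := n) [p132, p231]) : ℝ)
          / (n * classCard n (AvoidsAll [p132, p231])))
      Filter.atTop (nhds 0)
    ∧ Filter.Tendsto (fun n : ℕ =>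
        (totOcc p312 (AvoidsAll (n := n) [p132, p231]) : ℝ)
          / (n * classCard n (AvoidsAll [p132, p231])))
      Filter.atTop (nhds 0) := by
  exact ⟨S18.limA, S18.limB, S18.limC, S18.limD⟩
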